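/- For $a \in S = \{a \in (\mathbb{R}^+)^n : \sum_{i=1}^n a_i = 1\}$ and $-n < t < 0$, one has $\min_{x \in S} \frac{1 + t \min_{1 \leq i \leq n} x_i}{\sum_{i=1}^n a_i x_i} = \min\big[t + n, \frac{1}{\max_{1 \leq i \leq n} a_i}\big]$. -/

import Mathlib

open Finset Filter

/-- For `a` in the open standard simplex and `-n < t < 0`,
`min_{x ∈ S} (1 + t·minᵢ xᵢ) / (∑ aᵢ xᵢ) = min(t + n, 1/maxᵢ aᵢ)`. -/
theorem simplex_ratio_min (n : ℕ) (hn : 0 < n)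
    (a : Fin n → ℝ) (hapos : ∀ i, 0 < a i) (hasum : (∑ i, a i) = 1)
    (t : ℝ) (ht : -(n : ℝ) < t) (ht0 : t < 0) :
    sInf {v : ℝ | ∃ x : Fin n → ℝ, (∀ i, 0 < x i) ∧ (∑ i, x i) = 1 ∧
        v = (1 + t * ⨅ i, x i) / (∑ i, a i * x i)} =
      min (t + n) (⨆ i, a i)⁻¹ := by
  have hne : Nonempty (Fin n) := ⟨⟨0, hn⟩⟩
  have hnR : (0:ℝ) < n := by exact_mod_cast hn
  obtain ⟨j, hj⟩ := Finite.exists_max a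
  set M := a j with hMdef
  have hMsup : (⨆ i, a i) = M :=
    le_antisymm (ciSup_le hj) (le_ciSup (Set.finite_range a).bddAbove j)
  have hMpos : 0 < M := hapos j
  have hM1 : M ≤ 1 := hasum ▸ Finset.single_le_sum (fun i _ => (hapos i).le) (mem_univ j)
  set c := min (t + (n:ℝ)) M⁻¹ with hc
  have hcpos : 0 < c := lt_min (by linarith) (by positivity)
  have hcM : c * M ≤ 1 := by
    have h1 : c ≤ M⁻¹ := min_le_right _ _
    calc c * M ≤ M⁻¹ * M := by nlinarith
    _ = 1 := inv_mul_cancel₀ hMpos.ne'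
  have hctn : c ≤ t + n := min_le_left _ _
  rw [hMsup]
  -- lower bound: every value in the set is ≥ c
  have hlow : ∀ v ∈ {v : ℝ | ∃ x : Fin n → ℝ, (∀ i, 0 < x i) ∧ (∑ i, x i) = 1 ∧
        v = (1 + t * ⨅ i, x i) / (∑ i, a i * x i)}, c ≤ v := by
    rintro v ⟨x, hxpos, hxsum, rfl⟩
    obtain ⟨k, hk⟩ := Finite.exists_min x
    have hm : (⨅ i, x i) = x k :=
      le_antisymm (ciInf_le (Set.finite_range x).bddBelow k) (le_ciInf hk)
    rw [hm]
    set m := x k with hmdef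
    have hmpos : 0 < m := hxpos k
    have hnm : (n:ℝ) * m ≤ 1 := by
      calc (n:ℝ) * m = ∑ _i : Fin n, m := by simp [mul_comm]
      _ ≤ ∑ i, x i := Finset.sum_le_sum fun i _ => hk i
      _ = 1 := hxsum
    have hD : 0 < ∑ i, a i * x i :=
      Finset.sum_pos (fun i _ => mul_pos (hapos i) (hxpos i)) univ_nonempty
    have hDle : ∑ i, a i * x i ≤ m + M * (1 - n * m) := by
      have key : ∀ i ∈ univ, a i * x i ≤ a i * m + M * (x i - m) := by
        intro i _
        have h1 := hj i
        have h2 := hk i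
        nlinarith [hapos i]
      calc ∑ i, a i * x i ≤ ∑ i, (a i * m + M * (x i - m)) := Finset.sum_le_sum key
      _ = (∑ i, a i) * m + M * ((∑ i, x i) - (n:ℝ) * m) := by
          rw [Finset.sum_add_distrib, ← Finset.sum_mul, ← Finset.mul_sum,
            Finset.sum_sub_distrib]
          simp [mul_comm]
      _ = m + M * (1 - (n:ℝ) * m) := by rw [hasum, hxsum]; ring
    rw [le_div_iff₀ hD]
    nlinarith [mul_le_mul_of_nonneg_left hDle hcpos.le,
      mul_nonneg (sub_nonneg.2 hnm) (sub_nonneg.2 hcM),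
      mul_nonneg hmpos.le (sub_nonneg.2 hctn)]
  have hbdd : BddBelow {v : ℝ | ∃ x : Fin n → ℝ, (∀ i, 0 < x i) ∧ (∑ i, x i) = 1 ∧
        v = (1 + t * ⨅ i, x i) / (∑ i, a i * x i)} := ⟨c, hlow⟩
  -- the uniform point gives t + n
  have hmem : (t + (n:ℝ)) ∈ {v : ℝ | ∃ x : Fin n → ℝ, (∀ i, 0 < x i) ∧ (∑ i, x i) = 1 ∧
        v = (1 + t * ⨅ i, x i) / (∑ i, a i * x i)} := by
    refine ⟨fun _ => (n:ℝ)⁻¹, fun i => by positivity, ?_, ?_⟩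
    · simp [Finset.card_univ, mul_inv_cancel₀ hnR.ne']
    · rw [ciInf_const, ← Finset.sum_mul, hasum]
      field_simp
      ring
  apply le_antisymm
  · rcases le_total (t + (n:ℝ)) M⁻¹ with h | h
    · rw [min_eq_left h]
      exact csInf_le hbdd hmem
    · rw [min_eq_right h]
      -- here n ≥ 2
      have h1M : (1:ℝ) ≤ M⁻¹ := by nlinarith [inv_mul_cancel₀ hMpos.ne', inv_pos.2 hMpos]
      have hn1 : (1:ℝ) < n := by linarith
      have hn2 : (1:ℕ) < n := by exact_mod_cast hn1
      haveI : Nontrivial (Fin n) := Fin.nontrivial_iff_two_le.mpr hn2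
      obtain ⟨i₀, hi₀⟩ := exists_ne j
      set f : ℝ → ℝ := fun ε => (1 + t * (ε / n)) / (ε / n + M * (1 - ε)) with hf
      have hcont : ContinuousAt f 0 := by
        apply ContinuousAt.div
        · fun_prop
        · fun_prop
        · simp [hMpos.ne']
      have hf0 : f 0 = M⁻¹ := by simp [hf, one_div]
      have htend : Tendsto f (nhdsWithin (0:ℝ) (Set.Ioi 0)) (nhds M⁻¹) := by
        rw [← hf0]
        exact hcont.continuousWithinAt
      refine ge_of_tendsto htend ?_
      filter_upwards [Ioo_mem_nhdsGT_of_mem (Set.mem_Ico.mpr ⟨le_rfl, one_pos⟩)]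
        with ε hε
      obtain ⟨hε0, hε1⟩ := hε
      apply csInf_le hbdd
      refine ⟨fun i => ε / n + if i = j then 1 - ε else 0, ?_, ?_, ?_⟩
      · intro i
        simp only
        split <;> [nlinarith [div_pos hε0 hnR]; simpa using div_pos hε0 hnR]
      · rw [Finset.sum_add_distrib, Finset.sum_ite_eq' univ j (fun _ => 1 - ε)]
        simp [Finset.card_univ, mul_comm]
        field_simp
        ring
      · have hinf : (⨅ i, (ε / n + if i = j then 1 - ε else 0)) = ε / n := by
          apply le_antisymm
          · have := ciInf_le (Set.finite_range
              (fun i => ε / n + if i = j then 1 - ε else 0)).bddBelow i₀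
            simpa [hi₀] using this
          · refine le_ciInf fun i => ?_
            split <;> [linarith; linarith]
        rw [hinf]
        have hsum : ∑ i, a i * (ε / n + if i = j then 1 - ε else 0)
            = ε / n + M * (1 - ε) := by
          have : ∀ i, a i * (ε / n + if i = j then 1 - ε else 0)
              = a i * (ε / n) + (if i = j then a i * (1 - ε) else 0) := by
            intro i; split <;> ring
          rw [Finset.sum_congr rfl fun i _ => this i, Finset.sum_add_distrib,
            ← Finset.sum_mul, hasum, Finset.sum_ite_eq' univ j]
          simp
          exact Or.inl hMdef.symm
        rw [hsum]
  · exact le_csInf ⟨_, hmem⟩ hlow
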